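/- For every finite simple graph G with at least one vertex and every tree decomposition 𝒯 of G, there exists a vertex v ∈ V(G) such that the closed neighborhood N[v] = {v} ∪ {u : uv ∈ E(G)} is entirely contained in some bag of 𝒯. -/

import Mathlib

open SimpleGraph

set_option linter.unusedSectionVars false

section AuxTree

variable {ι : Type} [DecidableEq ι] {T : SimpleGraph ι}

lemma aux_concat_isPath {a b c : ι} (p : T.Walk a b) (hp : p.IsPath)
    (h : T.Adj b c) (hc : c ∉ p.support) : (p.concat h).IsPath := by
  rw [← SimpleGraph.Walk.isPath_reverse_iff, SimpleGraph.Walk.reverse_concat]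
  exact (hp.reverse).cons (by simpa [SimpleGraph.Walk.support_reverse] using hc)

lemma aux_path_length (hT : T.IsTree) {a b : ι} (p : T.Walk a b) (hp : p.IsPath) :
    p.length = T.dist a b := by
  obtain ⟨w, hw⟩ := hT.isConnected.exists_walk_length_eq_dist a b
  have hwp := w.isPath_of_length_eq_dist hw
  have := hT.IsAcyclic.path_unique ⟨p, hp⟩ ⟨w, hwp⟩
  rw [show p = w from congrArg Subtype.val this, hw]

lemma aux_path_support_subset (hT : T.IsTree) {a b : ι} (p : T.Walk a b)
    (hp : p.IsPath) (w : T.Walk a b) : p.support ⊆ w.support := by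
  have h := hT.IsAcyclic.path_unique ⟨p, hp⟩ w.toPath
  have : p.support = w.bypass.support := by
    rw [show p = w.bypass from congrArg Subtype.val h]
  rw [this]
  exact w.support_bypass_subset

lemma aux_dist_le_of_mem (hT : T.IsTree) {r b x : ι} (p : T.Walk r b) (hp : p.IsPath)
    (hx : x ∈ p.support) : T.dist r x ≤ T.dist r b := by
  have h1 : (p.takeUntil x hx).length = T.dist r x :=
    aux_path_length hT _ (hp.takeUntil hx)
  rw [← aux_path_length hT p hp, ← h1]
  exact p.length_takeUntil_le hx

lemma aux_eq_end (hT : T.IsTree) {r b x : ι} (p : T.Walk r b) (hp : p.IsPath)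
    (hx : x ∈ p.support) (hd : T.dist r x = p.length) : x = b := by
  have h1 : (p.takeUntil x hx).length = T.dist r x :=
    aux_path_length hT _ (hp.takeUntil hx)
  have h2 := congrArg SimpleGraph.Walk.length (p.take_spec hx)
  rw [SimpleGraph.Walk.length_append] at h2
  have h3 : (p.dropUntil x hx).length = 0 := by omega
  exact SimpleGraph.Walk.eq_of_length_eq_zero h3

lemma claimA (hT : T.IsTree) (r : ι) (S : Set ι) :
    ∀ {s m : ι} (w : T.Walk s m), (∀ x ∈ w.support, x ∈ S) →
      (∀ t ∈ S, T.dist r m ≤ T.dist r t) →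
      ∀ (p : T.Walk r s), p.IsPath → m ∈ p.support := by
  intro s m w
  induction w with
  | nil => exact fun _ _ p _ => p.end_mem_support
  | @cons s c m h w ih =>
    intro hw hmin p hp
    have hS : ∀ x ∈ w.support, x ∈ S := fun x hx => hw x (by simp [hx])
    by_cases hc : c ∈ p.support
    · exact p.support_takeUntil_subset hc (ih hS hmin _ (hp.takeUntil hc))
    · have hq : (p.concat h).IsPath := aux_concat_isPath p hp h hc
      have hm := ih hS hmin (p.concat h) hq
      rw [SimpleGraph.Walk.support_concat, List.mem_append] at hm
      rcases hm with hm | hm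
      · exact hm
      · exfalso
        simp only [List.mem_singleton] at hm
        subst hm
        have hlen : (p.concat h).length = T.dist r m := aux_path_length hT _ hq
        rw [SimpleGraph.Walk.length_concat] at hlen
        have hps : p.length = T.dist r s := aux_path_length hT p hp
        have hle : T.dist r m ≤ T.dist r s := hmin s (hw s (by simp))
        omega

end AuxTree

namespace Paper

/-- A tree decomposition of a graph `G`. -/
structure TreeDecomp {V : Type} (G : SimpleGraph V) where
  ι : Type
  fin : Fintype ι
  tree : SimpleGraph ι
  isTree : tree.IsTree
  bag : ι → Set V
  mem_bag : ∀ v : V, ∃ t, v ∈ bag t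
  edge_bag : ∀ ⦃u w : V⦄, G.Adj u w → ∃ t, u ∈ bag t ∧ w ∈ bag t
  coherent : ∀ v : V, (tree.induce {t | v ∈ bag t}).Connected

/-- `M` is an induced matching in `G`: a set of edges, pairwise disjoint,
with no edge of `G` joining endpoints of distinct edges of `M`. -/
def IsInducedMatching {V : Type} (G : SimpleGraph V) (M : Finset (V × V)) : Prop :=
  (∀ p ∈ M, G.Adj p.1 p.2) ∧
    ∀ p ∈ M, ∀ q ∈ M, p ≠ q →
      (p.1 ≠ q.1 ∧ p.1 ≠ q.2 ∧ p.2 ≠ q.1 ∧ p.2 ≠ q.2) ∧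
      (¬ G.Adj p.1 q.1 ∧ ¬ G.Adj p.1 q.2 ∧ ¬ G.Adj p.2 q.1 ∧ ¬ G.Adj p.2 q.2)

/-- Every edge of `M` has an endpoint in `X`. -/
def Touches {V : Type} (M : Finset (V × V)) (X : Set V) : Prop :=
  ∀ p ∈ M, p.1 ∈ X ∨ p.2 ∈ X

/-- μ(𝒯): the maximum size of an induced matching of `G` all of whose edges
touch a common bag of the tree decomposition `D`. -/
noncomputable def mu {V : Type} (G : SimpleGraph V) (D : TreeDecomp G) : ℕ :=
  sSup {n | ∃ (t : D.ι) (M : Finset (V × V)),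
    IsInducedMatching G M ∧ Touches M (D.bag t) ∧ M.card = n}

/-- Induced matching treewidth: minimum of μ(𝒯) over tree decompositions. -/
noncomputable def treeMu {V : Type} (G : SimpleGraph V) : ℕ :=
  sInf {n | ∃ D : TreeDecomp G, mu G D = n}

/-- `S` is an independent set of `G`. -/
def IsIndepSet {V : Type} (G : SimpleGraph V) (S : Finset V) : Prop :=
  ∀ u ∈ S, ∀ v ∈ S, u ≠ v → ¬ G.Adj u v

/-- α(𝒯): the maximum size of an independent set of `G` contained in a bag. -/
noncomputable def alphaTD {V : Type} (G : SimpleGraph V) (D : TreeDecomp G) : ℕ :=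
  sSup {n | ∃ (t : D.ι) (S : Finset V),
    IsIndepSet G S ∧ ↑S ⊆ D.bag t ∧ S.card = n}

/-- Tree-independence number: minimum of α(𝒯) over tree decompositions. -/
noncomputable def treeAlpha {V : Type} (G : SimpleGraph V) : ℕ :=
  sInf {n | ∃ D : TreeDecomp G, alphaTD G D = n}

/-- The `k`-th power of `G`: distinct vertices adjacent iff their distance in `G`
is at most `k` (for `k = 0` this is the edgeless graph). -/
def power {V : Type} (G : SimpleGraph V) (k : ℕ) : SimpleGraph V :=
  SimpleGraph.fromRel (fun u v => G.Reachable u v ∧ G.dist u v ≤ k)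

/-- The graph `G°[ℋ]` for a family `ℋ = {H j}` of subgraphs of `G`: vertices are
indices `j`, two distinct indices adjacent iff the subgraphs share a vertex or
there is an edge of `G` between them. -/
def blowup {V J : Type} (G : SimpleGraph V) (H : J → G.Subgraph) : SimpleGraph J :=
  SimpleGraph.fromRel (fun i j =>
    ((H i).verts ∩ (H j).verts).Nonempty ∨
      ∃ u ∈ (H i).verts, ∃ v ∈ (H j).verts, G.Adj u v)


/-- in every tree decomposition of a nonempty finite graph, some
closed neighborhood `N[v]` is contained in a single bag. -/
theorem stmt16 {V : Type} [Fintype V] [Nonempty V] (G : SimpleGraph V)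
    (D : TreeDecomp G) :
    ∃ (v : V) (t : D.ι), insert v (G.neighborSet v) ⊆ D.bag t := by
  classical
  letI := D.fin
  set T := D.tree with hTdef
  have hT : T.IsTree := D.isTree
  have hne : Nonempty D.ι := hT.isConnected.nonempty
  obtain ⟨r⟩ := hne
  set S : V → Set D.ι := fun v => {t | v ∈ D.bag t} with hSdef
  have htop : ∀ v : V, ∃ m : D.ι, m ∈ S v ∧ ∀ t ∈ S v, T.dist r m ≤ T.dist r t := by
    intro v
    obtain ⟨t0, ht0⟩ := D.mem_bag v
    obtain ⟨m, hm, hmin⟩ := Finset.exists_min_image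
      (Finset.univ.filter (· ∈ S v)) (T.dist r)
      ⟨t0, by simpa using (show t0 ∈ S v from ht0)⟩
    exact ⟨m, by simpa using hm, fun t ht => hmin t (by simpa using ht)⟩
  choose top htopS htopMin using htop
  have hwalk : ∀ (v : V) (a b : D.ι), a ∈ S v → b ∈ S v →
      ∃ w : T.Walk a b, ∀ x ∈ w.support, x ∈ S v := by
    intro v a b ha hb
    obtain ⟨w0⟩ := (D.coherent v) ⟨a, ha⟩ ⟨b, hb⟩
    refine ⟨w0.map (SimpleGraph.Embedding.induce (S v)).toHom, ?_⟩
    intro x hx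
    have hx : x ∈ w0.support.map (SimpleGraph.Embedding.induce (G := D.tree) (S v)).toHom := by
      rw [← SimpleGraph.Walk.support_map]; exact hx
    rw [List.mem_map] at hx
    obtain ⟨⟨y, hy⟩, _, rfl⟩ := hx
    exact hy
  obtain ⟨v, -, hvmax⟩ := Finset.exists_max_image Finset.univ
    (fun v : V => T.dist r (top v)) Finset.univ_nonempty
  refine ⟨v, top v, ?_⟩
  intro u hu
  rcases hu with rfl | hu
  · exact htopS u
  · have hadj : G.Adj v u := hu
    obtain ⟨s, hvs, hus⟩ := D.edge_bag hadj
    obtain ⟨p, hplen⟩ := hT.isConnected.exists_walk_length_eq_dist r s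
    have hp : p.IsPath := p.isPath_of_length_eq_dist hplen
    obtain ⟨wv, hwv⟩ := hwalk v s (top v) hvs (htopS v)
    have hmv : top v ∈ p.support := claimA hT r (S v) wv hwv (htopMin v) p hp
    obtain ⟨wu, hwu⟩ := hwalk u s (top u) hus (htopS u)
    have hmu : top u ∈ p.support := claimA hT r (S u) wu hwu (htopMin u) p hp
    have hsplit := p.take_spec hmu
    rw [← hsplit, SimpleGraph.Walk.mem_support_append_iff] at hmv
    rcases hmv with hmv | hmv
    · have htake : (p.takeUntil (top u) hmu).IsPath := hp.takeUntil hmu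
      have h1 : T.dist r (top v) ≤ T.dist r (top u) :=
        aux_dist_le_of_mem hT _ htake hmv
      have h2 : T.dist r (top u) ≤ T.dist r (top v) := hvmax u (Finset.mem_univ u)
      have hlen : (p.takeUntil (top u) hmu).length = T.dist r (top u) :=
        aux_path_length hT _ htake
      have heq : top v = top u :=
        aux_eq_end hT _ htake hmv (by omega)
      rw [heq]
      exact htopS u
    · have hdrop : (p.dropUntil (top u) hmu).IsPath := hp.dropUntil hmu
      obtain ⟨wu', hwu'⟩ := hwalk u (top u) s (htopS u) hus
      have hsub := aux_path_support_subset hT _ hdrop wu'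
      exact hwu' _ (hsub hmv)


end Paper
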